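/- arXiv:1809.06435 — 2 statements merged into one kernel-verified Lean document; each statement's English description precedes it below -/
import Mathlib

section
/- Let A be a maximal cyclic subgroup of a free group F_n of finite rank, and let p be any prime. Then A is closed in the pro-p topology on F_n: for every x ∈ F_n with x ∉ A, there is a finite p-group P and a homomorphism φ : F_n → P with φ(x) ∉ φ(A). -/
open Matrix

namespace Stmt6Aux

abbrev SL2Z := Matrix.SpecialLinearGroup (Fin 2) ℤ

def Sm (p : ℕ) : SL2Z := ⟨!![1,(p:ℤ);0,1], by simp [Matrix.det_fin_two_of]⟩
def Tm (p : ℕ) : SL2Z := ⟨!![1,0;(p:ℤ),1], by simp [Matrix.det_fin_two_of]⟩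

theorem coe_Sm_zpow (p : ℕ) (k : ℤ) : ((Sm p)^k).1 = !![1, k*p; 0, 1] := by
  induction' k using Int.induction_on with k h k h
  · rw [zpow_zero, Matrix.SpecialLinearGroup.coe_one, Matrix.one_fin_two]; norm_num
  · simp_rw [_root_.zpow_add, zpow_one, Matrix.SpecialLinearGroup.coe_mul, h]
    show _ * (Sm p).1 = _
    rw [Sm, Matrix.mul_fin_two]
    ext i j; fin_cases i <;> fin_cases j <;> simp <;> push_cast <;> ring
  · have hinv : ((Sm p)⁻¹).1 = !![1, -(p:ℤ); 0, 1] := by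
      rw [Matrix.SpecialLinearGroup.coe_inv, Sm, Matrix.adjugate_fin_two]
      norm_num
    simp_rw [_root_.zpow_sub, zpow_one, Matrix.SpecialLinearGroup.coe_mul, h, hinv,
      Matrix.mul_fin_two]
    ext i j; fin_cases i <;> fin_cases j <;> simp <;> push_cast <;> ring

theorem coe_Tm_zpow (p : ℕ) (k : ℤ) : ((Tm p)^k).1 = !![1, 0; k*p, 1] := by
  induction' k using Int.induction_on with k h k h
  · rw [zpow_zero, Matrix.SpecialLinearGroup.coe_one, Matrix.one_fin_two]; norm_num
  · simp_rw [_root_.zpow_add, zpow_one, Matrix.SpecialLinearGroup.coe_mul, h]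
    show _ * (Tm p).1 = _
    rw [Tm, Matrix.mul_fin_two]
    ext i j; fin_cases i <;> fin_cases j <;> simp <;> push_cast <;> ring
  · have hinv : ((Tm p)⁻¹).1 = !![1, 0; -(p:ℤ), 1] := by
      rw [Matrix.SpecialLinearGroup.coe_inv, Tm, Matrix.adjugate_fin_two]
      norm_num
    simp_rw [_root_.zpow_sub, zpow_one, Matrix.SpecialLinearGroup.coe_mul, h, hinv,
      Matrix.mul_fin_two]
    ext i j; fin_cases i <;> fin_cases j <;> simp <;> push_cast <;> ring

instance instSMulSL : SMul SL2Z (Fin 2 → ℤ) :=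
  ⟨fun g v => (g : Matrix (Fin 2) (Fin 2) ℤ).mulVec v⟩

instance instMulActionSL : MulAction SL2Z (Fin 2 → ℤ) where
  one_smul v := show ((1 : SL2Z) : Matrix (Fin 2) (Fin 2) ℤ).mulVec v = v by simp
  mul_smul g h v := by
    show ((g*h : SL2Z) : Matrix (Fin 2) (Fin 2) ℤ).mulVec v =
      (g : Matrix (Fin 2) (Fin 2) ℤ).mulVec ((h : Matrix (Fin 2) (Fin 2) ℤ).mulVec v)
    rw [Matrix.SpecialLinearGroup.coe_mul, ← Matrix.mulVec_mulVec]

theorem smul_def (g : SL2Z) (v : Fin 2 → ℤ) :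
    g • v = (g : Matrix (Fin 2) (Fin 2) ℤ).mulVec v := rfl

/-- attracting cone of Tm -/
def CC : Set (Fin 2 → ℤ) := {v | |v 0| < |v 1|}
/-- attracting cone of Sm -/
def DD : Set (Fin 2 → ℤ) := {v | |v 1| < |v 0|}

theorem Sm_zpow_smul (p : ℕ) (k : ℤ) (v : Fin 2 → ℤ) :
    (Sm p)^k • v = ![v 0 + k*p*v 1, v 1] := by
  rw [smul_def, coe_Sm_zpow]
  funext i
  fin_cases i <;> simp [Matrix.mulVec, dotProduct, Fin.sum_univ_two] <;> ring

theorem Tm_zpow_smul (p : ℕ) (k : ℤ) (v : Fin 2 → ℤ) :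
    (Tm p)^k • v = ![v 0, k*p*v 0 + v 1] := by
  rw [smul_def, coe_Tm_zpow]
  funext i
  fin_cases i <;> simp [Matrix.mulVec, dotProduct, Fin.sum_univ_two] <;> ring

theorem abs_key {a b : ℤ} (k : ℤ) (p : ℕ) (hp : 2 ≤ p) (hk : k ≠ 0)
    (hab : |a| < |b|) : |b| < |a + k*p*b| := by
  have h2 : |k*p*b| ≤ |a + k*p*b| + |a| := by
    calc |k*p*b| = |(a + k*p*b) + (-a)| := by ring_nf
      _ ≤ |a + k*p*b| + |(-a)| := abs_add_le _ _
      _ = |a + k*p*b| + |a| := by rw [abs_neg]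
  have hk1 : (1:ℤ) ≤ |k| := Int.one_le_abs (by exact_mod_cast hk)
  have hpp : (2:ℤ) ≤ |(p:ℤ)| := by
    rw [abs_of_nonneg (by positivity)]; exact_mod_cast hp
  have h3 : 2 * |b| ≤ |k*p*b| := by
    rw [abs_mul, abs_mul]
    have h4 : (2:ℤ) ≤ |k| * |(p:ℤ)| := by nlinarith
    exact le_trans (by linarith [abs_nonneg b, mul_le_mul_of_nonneg_right h4 (abs_nonneg b)])
      (le_refl _)
  linarith

theorem Sm_zpow_smul_mem (p : ℕ) (hp : 2 ≤ p) (k : ℤ) (hk : k ≠ 0)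
    {v : Fin 2 → ℤ} (hv : v ∈ CC) : (Sm p)^k • v ∈ DD := by
  rw [Sm_zpow_smul]
  simp only [DD, Set.mem_setOf_eq, Matrix.cons_val_one, Matrix.head_cons, Matrix.cons_val_zero]
  exact abs_key k p hp hk hv

theorem Tm_zpow_smul_mem (p : ℕ) (hp : 2 ≤ p) (k : ℤ) (hk : k ≠ 0)
    {v : Fin 2 → ℤ} (hv : v ∈ DD) : (Tm p)^k • v ∈ CC := by
  rw [Tm_zpow_smul]
  simp only [CC, Set.mem_setOf_eq, Matrix.cons_val_one, Matrix.head_cons, Matrix.cons_val_zero]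
  have := abs_key (a := v 1) (b := v 0) k p hp hk hv
  simpa [add_comm] using this

end Stmt6Aux
namespace Stmt6Aux

open Monoid Matrix Pointwise

/-- the generators: conjugates of Tm by powers of Sm -/
def gen (p : ℕ) (m : ℕ) (i : Fin m) : SL2Z :=
  (Sm p)^((i:ℕ):ℤ) * Tm p * ((Sm p)^((i:ℕ):ℤ))⁻¹

/-- ping-pong sets -/
def XX (p : ℕ) (m : ℕ) (i : Fin m) : Set (Fin 2 → ℤ) := (Sm p)^((i:ℕ):ℤ) • CC

theorem Sm_zpow_smul_set (p : ℕ) (hp : 2 ≤ p) (k : ℤ) (hk : k ≠ 0) :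
    (Sm p)^k • CC ⊆ DD := by
  rintro x ⟨v, hv, rfl⟩
  exact Sm_zpow_smul_mem p hp k hk hv

theorem Tm_zpow_smul_set (p : ℕ) (hp : 2 ≤ p) (k : ℤ) (hk : k ≠ 0) :
    (Tm p)^k • DD ⊆ CC := by
  rintro x ⟨v, hv, rfl⟩
  exact Tm_zpow_smul_mem p hp k hk hv

theorem gen_zpow_smul (p : ℕ) (hp : 2 ≤ p) (m : ℕ) {i j : Fin m} (hij : i ≠ j) (k : ℤ)
    (hk : k ≠ 0) : (gen p m i)^k • XX p m j ⊆ XX p m i := by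
  have hconj : (gen p m i)^k = (Sm p)^((i:ℕ):ℤ) * (Tm p)^k * ((Sm p)^((i:ℕ):ℤ))⁻¹ := by
    rw [gen, conj_zpow]
  have hd : (((j:ℕ):ℤ) - ((i:ℕ):ℤ)) ≠ 0 := by
    intro h
    exact hij (Fin.ext (by omega))
  calc (gen p m i)^k • XX p m j
      = (Sm p)^((i:ℕ):ℤ) • (Tm p)^k • ((Sm p)^((i:ℕ):ℤ))⁻¹ • (Sm p)^((j:ℕ):ℤ) • CC := by
        rw [hconj, XX, mul_smul, mul_smul]
    _ = (Sm p)^((i:ℕ):ℤ) • (Tm p)^k • ((Sm p)^(((j:ℕ):ℤ) - ((i:ℕ):ℤ))) • CC := by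
        rw [← mul_smul (((Sm p)^((i:ℕ):ℤ))⁻¹), ← _root_.zpow_neg, ← _root_.zpow_add, neg_add_eq_sub]
    _ ⊆ (Sm p)^((i:ℕ):ℤ) • (Tm p)^k • DD := by
        apply Set.smul_set_mono; apply Set.smul_set_mono
        exact Sm_zpow_smul_set p hp _ hd
    _ ⊆ (Sm p)^((i:ℕ):ℤ) • CC := by
        apply Set.smul_set_mono
        exact Tm_zpow_smul_set p hp _ hk
    _ = XX p m i := rfl

theorem XX_nonempty (p : ℕ) (m : ℕ) (i : Fin m) : (XX p m i).Nonempty :=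
  ⟨(Sm p)^((i:ℕ):ℤ) • ![0,1], ![0,1], by simp [CC], rfl⟩

theorem XX_disj (p : ℕ) (hp : 2 ≤ p) (m : ℕ) : Pairwise (Function.onFun Disjoint (XX p m)) := by
  intro i j hij
  rw [Function.onFun, Set.disjoint_left]
  rintro x ⟨v, hv, rfl⟩ ⟨w, hw, hwx⟩
  have hd : (-((i:ℕ):ℤ) + ((j:ℕ):ℤ)) ≠ 0 := by
    intro h; exact hij (Fin.ext (by omega))
  have hv2 : v = ((Sm p)^(-((i:ℕ):ℤ) + ((j:ℕ):ℤ))) • w := by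
    have h1 := congrArg (fun y => ((Sm p)^((i:ℕ):ℤ))⁻¹ • y) hwx
    simp only [inv_smul_smul] at h1
    rw [← h1, ← mul_smul, ← _root_.zpow_neg, ← _root_.zpow_add]
  have hvDD : v ∈ DD := hv2 ▸ Sm_zpow_smul_mem p hp _ hd hw
  have h3 : |v 0| < |v 1| := hv
  have h4 : |v 1| < |v 0| := hvDD
  omega

theorem gen_lift_injective (p : ℕ) (hp : 2 ≤ p) (n : ℕ) :
    Function.Injective (FreeGroup.lift (gen p (n+2))) := by
  have heq : FreeGroup.lift (gen p (n+2)) =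
      (CoprodI.lift fun i : Fin (n+2) => FreeGroup.lift fun _ : Unit => gen p (n+2) i).comp
        (@freeGroupEquivCoprodI (Fin (n+2))).toMonoidHom := by
    ext i
    simp
  rw [heq, MonoidHom.coe_comp]
  refine Function.Injective.comp ?_ (MulEquiv.injective freeGroupEquivCoprodI)
  haveI : Infinite (FreeGroup Unit) :=
    Infinite.of_injective _ FreeGroup.freeGroupUnitEquivInt.symm.injective
  apply CoprodI.lift_injective_of_ping_pong _ ?_ (XX p (n+2))
    (XX_nonempty p (n+2)) (XX_disj p hp (n+2))
  · -- hpp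
    intro i j hij
    refine FreeGroup.freeGroupUnitEquivInt.forall_congr_left.mpr ?_
    intro k hk1
    change FreeGroup.lift (fun _ : Unit => gen p (n+2) i) (FreeGroup.of () ^ k) • XX p (n+2) j
      ⊆ XX p (n+2) i
    have hkne : k ≠ 0 := by
      rintro rfl
      exact hk1 (zpow_zero (FreeGroup.of ()))
    rw [map_zpow, FreeGroup.lift_apply_of]
    exact gen_zpow_smul p hp (n+2) hij k hkne
  · -- hcard
    right
    exact ⟨0, le_trans (by exact_mod_cast (Cardinal.nat_lt_aleph0 3).le) (Cardinal.aleph0_le_mk _)⟩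

end Stmt6Aux
namespace Stmt6Aux

open Finset

theorem dvd_aux (p j : ℕ) (hj : 1 ≤ j) :
    ∀ k ∈ Finset.Ico 1 (p+1), p^(j+1) ∣ p.choose k * p^(j*k) := by
  intro k hk
  rcases eq_or_lt_of_le (Finset.mem_Ico.mp hk).1 with h1 | h2
  · rw [← h1, Nat.choose_one_right, mul_one, ← pow_succ']
  · have hle : j + 1 ≤ j * k := by nlinarith
    exact Dvd.dvd.mul_left (pow_dvd_pow p hle) _

theorem step_lemma {R : Type*} [Ring R] (p j : ℕ) (hj : 1 ≤ j) (B : R) :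
    ∃ C : R, (1 + (p:R)^j * B)^p = 1 + (p:R)^(j+1) * C := by
  classical
  set x := (p:R)^j * B with hx
  refine ⟨∑ k ∈ Finset.Ico 1 (p+1), ((p.choose k * p^(j*k)) / p^(j+1) : ℕ) * B^k, ?_⟩
  have hbin : (x + 1)^p = ∑ k ∈ Finset.range (p+1), x^k * 1^(p-k) * (p.choose k : R) :=
    Commute.add_pow (Commute.one_right x) p
  have hsplit : Finset.range (p+1) = insert 0 (Finset.Ico 1 (p+1)) := by
    ext k; simp [Finset.mem_range, Finset.mem_Ico]; omega
  have hterm : ∀ k ∈ Finset.Ico 1 (p+1),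
      x^k * 1^(p-k) * (p.choose k : R) = (p:R)^(j+1) * (((p.choose k * p^(j*k)) / p^(j+1) : ℕ) * B^k) := by
    intro k hk
    have hxk : x^k = (p:R)^(j*k) * B^k := by
      rw [hx, Commute.mul_pow ((Nat.cast_commute p B).pow_left j), ← pow_mul]
    rw [hxk, one_pow, mul_one]
    have hcomm : Commute ((p.choose k : R)) ((p:R)^(j*k) * B^k) :=
      (Nat.cast_commute _ _)
    rw [← hcomm.eq]
    have h5 : ((p.choose k : R)) * ((p:R)^(j*k) * B^k) = ((p.choose k * p^(j*k) : ℕ) : R) * B^k := by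
      rw [Nat.cast_mul, Nat.cast_pow, mul_assoc]
    rw [h5]
    have hd := dvd_aux p j hj k hk
    rw [← mul_assoc, ← Nat.cast_pow, ← Nat.cast_mul, Nat.mul_div_cancel' hd]
  calc (1 + x)^p = (x + 1)^p := by rw [add_comm]
    _ = ∑ k ∈ Finset.range (p+1), x^k * 1^(p-k) * (p.choose k : R) := hbin
    _ = x^0 * 1^(p-0) * (p.choose 0 : R)
        + ∑ k ∈ Finset.Ico 1 (p+1), x^k * 1^(p-k) * (p.choose k : R) := by
        rw [hsplit, Finset.sum_insert (by simp)]
    _ = 1 + ∑ k ∈ Finset.Ico 1 (p+1), (p:R)^(j+1) * (((p.choose k * p^(j*k)) / p^(j+1) : ℕ) * B^k) := by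
        rw [Finset.sum_congr rfl hterm]; simp
    _ = 1 + (p:R)^(j+1) * ∑ k ∈ Finset.Ico 1 (p+1), (((p.choose k * p^(j*k)) / p^(j+1) : ℕ) * B^k) := by
        rw [Finset.mul_sum]

theorem iter_lemma {R : Type*} [Ring R] (p : ℕ) (i : ℕ) (B : R) :
    ∃ C : R, (1 + (p:R) * B)^(p^i) = 1 + (p:R)^(i+1) * C := by
  induction i with
  | zero => exact ⟨B, by simp⟩
  | succ i ih =>
    obtain ⟨C, hC⟩ := ih
    obtain ⟨C', hC'⟩ := step_lemma p (i+1) (by omega) C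
    exact ⟨C', by rw [pow_succ, pow_mul, hC, hC']⟩

end Stmt6Aux
namespace Stmt6Aux

open Matrix

theorem zmod_p_dvd (p m : ℕ) (hp : p.Prime) (hm : m ≠ 0) (x : ZMod (p^m))
    (hx : ZMod.castHom (dvd_pow_self p hm) (ZMod p) x = 0) :
    ∃ y : ZMod (p^m), x = p * y := by
  haveI : NeZero (p^m) := ⟨pow_ne_zero m hp.ne_zero⟩
  have hval : ((x.val : ℕ) : ZMod (p^m)) = x := ZMod.natCast_rightInverse x
  have h0 : ((x.val : ℕ) : ZMod p) = 0 := by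
    rw [← map_natCast (ZMod.castHom (dvd_pow_self p hm) (ZMod p)) x.val, hval, hx]
  rw [ZMod.natCast_eq_zero_iff] at h0
  obtain ⟨t, ht⟩ := h0
  exact ⟨(t : ZMod (p^m)), by rw [← hval, ht]; push_cast; ring⟩

theorem sl_pow_eq_one (p m : ℕ) (hp : p.Prime) (hm : m ≠ 0)
    (g : Matrix.SpecialLinearGroup (Fin 2) (ZMod (p^m)))
    (hker : Matrix.SpecialLinearGroup.map
      (ZMod.castHom (dvd_pow_self p hm) (ZMod p)) g = 1) :
    g ^ (p^(m-1)) = 1 := by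
  set f := ZMod.castHom (dvd_pow_self p hm) (ZMod p) with hf
  set A : Matrix (Fin 2) (Fin 2) (ZMod (p^m)) := (g : Matrix (Fin 2) (Fin 2) (ZMod (p^m))) with hA
  have hmat : A.map f = 1 := by
    have h := congrArg (Subtype.val) hker
    simpa [Matrix.SpecialLinearGroup.map_apply_coe, RingHom.mapMatrix_apply] using h
  have hentry : ∀ i j, ∃ y : ZMod (p^m), A i j - (1 : Matrix (Fin 2) (Fin 2) (ZMod (p^m))) i j = p * y := by
    intro i j
    apply zmod_p_dvd p m hp hm
    rw [map_sub]
    have h1 : f (A i j) = (1 : Matrix (Fin 2) (Fin 2) (ZMod p)) i j := by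
      rw [← hmat, Matrix.map_apply]
    have h2 : f ((1 : Matrix (Fin 2) (Fin 2) (ZMod (p^m))) i j) = (1 : Matrix (Fin 2) (Fin 2) (ZMod p)) i j := by
      rw [Matrix.one_apply, Matrix.one_apply, apply_ite f]
      split <;> simp
    rw [h1, h2, sub_self]
  choose B hB using fun i => hentry i
  have hAeq : A = 1 + (p : Matrix (Fin 2) (Fin 2) (ZMod (p^m))) * (Matrix.of fun i j => B i j) := by
    ext i j
    rw [Matrix.add_apply, ← Matrix.diagonal_natCast (n := Fin 2) p, Matrix.diagonal_mul]
    simp only [Matrix.of_apply]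
    linear_combination (hB i j)
  obtain ⟨C, hC⟩ := iter_lemma (R := Matrix (Fin 2) (Fin 2) (ZMod (p^m))) p (m-1)
    (Matrix.of fun i j => B i j)
  have hpm : (p : Matrix (Fin 2) (Fin 2) (ZMod (p^m)))^((m-1)+1) = 0 := by
    have h1 : (m-1)+1 = m := by omega
    rw [h1, ← Nat.cast_pow, ← Matrix.diagonal_natCast (n := Fin 2) (p^m)]
    have h2 : ((p^m : ℕ) : ZMod (p^m)) = 0 := ZMod.natCast_self _
    simp only [h2, Matrix.diagonal_zero]
  have hApow : A ^ (p^(m-1)) = 1 := by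
    rw [hAeq, hC, hpm, zero_mul, add_zero]
  apply Subtype.ext
  rw [Matrix.SpecialLinearGroup.coe_pow]
  exact hApow

theorem ker_pgroup (p m : ℕ) (hp : p.Prime) (hm : m ≠ 0) :
    IsPGroup p (MonoidHom.ker (Matrix.SpecialLinearGroup.map (n := Fin 2)
      (ZMod.castHom (dvd_pow_self p hm) (ZMod p)))) := by
  intro g
  refine ⟨m - 1, Subtype.ext ?_⟩
  rw [SubgroupClass.coe_pow, OneMemClass.coe_one]
  exact sl_pow_eq_one p m hp hm _ (MonoidHom.mem_ker.mp g.2)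

end Stmt6Aux
namespace Stmt6Aux

open Matrix

theorem freegroup_empty_eq_one {β : Type} [IsEmpty β] (g : FreeGroup β) : g = 1 := by
  refine FreeGroup.induction_on (C := fun z => z = 1) g rfl ?_ ?_ ?_
  · intro x; exact (IsEmpty.false x).elim
  · intro x hx; rw [hx]; simp
  · intro x y hx hy; rw [hx, hy, one_mul]

theorem resid (p : ℕ) (hp : p.Prime) (n : ℕ) (g : FreeGroup (Fin n)) (hg : g ≠ 1) :
    ∃ (P : Type) (_ : Group P) (_ : Finite P), IsPGroup p P ∧
      ∃ φ : FreeGroup (Fin n) →* P, φ g ≠ 1 := by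
  rcases Nat.eq_zero_or_pos n with rfl | hn
  · exact absurd (freegroup_empty_eq_one g) hg
  have hle : n ≤ n + 2 := by omega
  have hp2 : 2 ≤ p := hp.two_le
  set ψ : FreeGroup (Fin n) →* SL2Z :=
    (FreeGroup.lift (gen p (n+2))).comp (FreeGroup.map (Fin.castLE hle)) with hψ
  -- injectivity of the composition on our g
  have hmapne : FreeGroup.map (Fin.castLE hle) g ≠ 1 := by
    intro h
    apply hg
    have hr : ∀ z : FreeGroup (Fin n),
        FreeGroup.map (fun k : Fin (n+2) => if hk : (k:ℕ) < n then (⟨k, hk⟩ : Fin n) else ⟨0, hn⟩)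
          (FreeGroup.map (Fin.castLE hle) z) = z := by
      intro z
      rw [FreeGroup.map.comp]
      have : ((fun k : Fin (n+2) => if hk : (k:ℕ) < n then (⟨k, hk⟩ : Fin n) else ⟨0, hn⟩) ∘
          (Fin.castLE hle)) = id := by
        funext i
        simp [Fin.castLE, i.isLt]
      rw [this, FreeGroup.map.id]
    calc g = FreeGroup.map _ (FreeGroup.map (Fin.castLE hle) g) := (hr g).symm
      _ = FreeGroup.map _ (1 : FreeGroup (Fin (n+2))) := by rw [h]
      _ = 1 := by simp
  have hψg : ψ g ≠ 1 := by
    intro h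
    apply hmapne
    apply gen_lift_injective p hp2 n
    exact h
  -- find a differing entry
  have hM : ∃ i j, (ψ g).1 i j ≠ (1 : SL2Z).1 i j := by
    by_contra hcon
    push_neg at hcon
    exact hψg (Subtype.ext (by ext i j; exact hcon i j))
  obtain ⟨i, j, hij⟩ := hM
  set c : ℤ := (ψ g).1 i j - (1 : SL2Z).1 i j with hc
  have hcne : c ≠ 0 := sub_ne_zero.mpr hij
  set m : ℕ := c.natAbs with hm
  have hmne : m ≠ 0 := Int.natAbs_ne_zero.mpr hcne
  have hnotdvd : ¬ ((p:ℤ)^m ∣ c) := by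
    intro hdvd
    have h1 : p^m ∣ c.natAbs := by
      have h0 : ((p^m : ℕ) : ℤ) ∣ c := by push_cast; exact hdvd
      have h0' := Int.natAbs_dvd_natAbs.mpr h0
      rwa [Int.natAbs_natCast] at h0'
    have h2 : p^m ≤ c.natAbs := Nat.le_of_dvd (Nat.pos_of_ne_zero hmne) h1
    have h3 : m < 2^m := Nat.lt_two_pow_self
    have h4 : 2^m ≤ p^m := Nat.pow_le_pow_left hp2 m
    omega
  haveI : NeZero (p^m) := ⟨pow_ne_zero m hp.ne_zero⟩
  set ρ : SL2Z →* Matrix.SpecialLinearGroup (Fin 2) (ZMod (p^m)) :=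
    Matrix.SpecialLinearGroup.map (Int.castRingHom (ZMod (p^m))) with hρ
  set K := MonoidHom.ker (Matrix.SpecialLinearGroup.map (n := Fin 2)
    (ZMod.castHom (dvd_pow_self p hmne) (ZMod p))) with hK
  -- all elements land in the kernel
  set π : Matrix.SpecialLinearGroup (Fin 2) (ZMod (p^m)) →* Matrix.SpecialLinearGroup (Fin 2) (ZMod p) :=
    Matrix.SpecialLinearGroup.map (n := Fin 2) (ZMod.castHom (dvd_pow_self p hmne) (ZMod p)) with hπ
  have htheta : ∀ q : SL2Z, (q.1.map (fun x : ℤ => (x : ZMod p))) = 1 → π (ρ q) = 1 := by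
    intro q hq
    apply Subtype.ext
    show ((q.1.map (fun x : ℤ => (x : ZMod (p^m)))).map _) = ((1 : Matrix.SpecialLinearGroup (Fin 2) (ZMod p)) : Matrix (Fin 2) (Fin 2) (ZMod p))
    rw [Matrix.map_map, Matrix.SpecialLinearGroup.coe_one, ← hq]
    ext i' j'
    simp only [Matrix.map_apply, Function.comp_apply]
    exact map_intCast (ZMod.castHom (dvd_pow_self p hmne) (ZMod p)) _
  have hSm1 : π (ρ (Sm p)) = 1 := by
    apply htheta
    ext i j
    fin_cases i <;> fin_cases j <;>
      simp [Sm, Matrix.one_apply] <;>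
      · push_cast
        exact ZMod.natCast_self p
  have hTm1 : π (ρ (Tm p)) = 1 := by
    apply htheta
    ext i j
    fin_cases i <;> fin_cases j <;>
      simp [Tm, Matrix.one_apply] <;>
      · push_cast
        exact ZMod.natCast_self p
  have hgen1 : ∀ i : Fin (n+2), π (ρ (gen p (n+2) i)) = 1 := by
    intro i
    simp only [gen, _root_.map_mul, map_inv, map_zpow, hSm1, hTm1]
    simp
  have hmem : ∀ z : FreeGroup (Fin n), ρ (ψ z) ∈ K := by
    intro z
    rw [MonoidHom.mem_ker]
    have hhom : π.comp (ρ.comp ψ) = 1 := by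
      apply FreeGroup.ext_hom
      intro a
      have hψof : ψ (FreeGroup.of a) = gen p (n+2) (Fin.castLE hle a) := by
        rw [hψ, MonoidHom.comp_apply, FreeGroup.map.of, FreeGroup.lift_apply_of]
      simp only [MonoidHom.comp_apply, hψof, MonoidHom.one_apply]
      exact hgen1 _
    have := congrArg (fun F : FreeGroup (Fin n) →* Matrix.SpecialLinearGroup (Fin 2) (ZMod p) => F z) hhom
    simpa using this
  -- the homomorphism into the kernel
  refine ⟨↥K, inferInstance, inferInstance, ker_pgroup p m hp hmne,
    (ρ.comp ψ).codRestrict K hmem, ?_⟩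
  intro hone
  -- extract matrix entry equality
  have h1 : ρ (ψ g) = 1 := by
    have := congrArg (Subtype.val) hone
    simpa using this
  have h2 : ((ψ g).1.map (fun x : ℤ => (x : ZMod (p^m)))) = ((1:SL2Z).1.map (fun x : ℤ => (x : ZMod (p^m)))) := by
    have := congrArg (Subtype.val) h1
    simp only [hρ] at this
    rw [show ((1:SL2Z).1.map (fun x : ℤ => (x : ZMod (p^m)))) = 1 by
      rw [Matrix.SpecialLinearGroup.coe_one]; exact Matrix.map_one _ (by simp) (by simp)]
    exact this
  have h3 : ((c : ℤ) : ZMod (p^m)) = 0 := by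
    have := congrArg (fun M : Matrix (Fin 2) (Fin 2) (ZMod (p^m)) => M i j) h2
    simp only [Matrix.map_apply] at this
    rw [hc]
    push_cast
    rw [this]
    ring
  rw [ZMod.intCast_zmod_eq_zero_iff_dvd] at h3
  apply hnotdvd
  have : ((p^m : ℕ) : ℤ) ∣ c := h3
  push_cast at this
  exact this

end Stmt6Aux
namespace Stmt6Aux

open Matrix

theorem of_not_commute {β : Type*} [DecidableEq β] {s t : β} (hst : s ≠ t) :
    ¬ Commute (FreeGroup.of s) (FreeGroup.of t) := by
  intro h
  have hlift := congrArg (FreeGroup.lift (fun u : β => if u = s then Sm 2 else Tm 2)) h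
  simp only [_root_.map_mul, FreeGroup.lift_apply_of, if_pos rfl, ↓reduceIte,
    if_neg (fun h' : t = s => hst h'.symm)] at hlift
  have h2 := congrArg (fun M : SL2Z => (M : Matrix (Fin 2) (Fin 2) ℤ) 0 0) hlift
  rw [Matrix.SpecialLinearGroup.coe_mul, Matrix.SpecialLinearGroup.coe_mul] at h2
  simp only [Matrix.SpecialLinearGroup.coe_mul, Sm, Tm, Matrix.mul_apply,
    Fin.sum_univ_two] at h2
  norm_num at h2

theorem mem_zpowers_of_subsingleton {β : Type*} [Subsingleton β] (u : β) (z : FreeGroup β) :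
    z ∈ Subgroup.zpowers (FreeGroup.of u) := by
  refine FreeGroup.induction_on (C := fun z => z ∈ Subgroup.zpowers (FreeGroup.of u)) z
    (one_mem _) ?_ ?_ ?_
  · intro x; rw [Subsingleton.elim x u]; exact Subgroup.mem_zpowers _
  · intro x hx; exact inv_mem hx
  · intro x y hx hy; exact mul_mem hx hy

theorem exists_common_zpowers {n : ℕ} {x a : FreeGroup (Fin n)}
    (h : Commute x a) (ha : a ≠ 1) :
    ∃ E : FreeGroup (Fin n), x ∈ Subgroup.zpowers E ∧ a ∈ Subgroup.zpowers E := by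
  classical
  set H : Subgroup (FreeGroup (Fin n)) := Subgroup.closure {x, a} with hH
  have hxH : x ∈ H := Subgroup.subset_closure (by simp)
  have haH : a ∈ H := Subgroup.subset_closure (by simp)
  -- everything in H commutes with x and a
  have hbase : ∀ g ∈ H, Commute x g ∧ Commute a g := by
    intro g hg
    induction hg using Subgroup.closure_induction with
    | mem y hy =>
      rcases hy with rfl | hy
      · exact ⟨Commute.refl _, h.symm⟩
      · rcases hy with rfl
        exact ⟨h, Commute.refl _⟩
    | one => exact ⟨Commute.one_right _, Commute.one_right _⟩
    | mul y z _ _ hy hz => exact ⟨hy.1.mul_right hz.1, hy.2.mul_right hz.2⟩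
    | inv y _ hy => exact ⟨hy.1.inv_right, hy.2.inv_right⟩
  have hcomm : ∀ u v : ↥H, Commute u v := by
    rintro ⟨u, hu⟩ v
    have : Commute u (v : FreeGroup (Fin n)) := by
      induction hu using Subgroup.closure_induction with
      | mem y hy =>
        rcases hy with rfl | hy
        · exact ((hbase _ v.2).1)
        · rcases hy with rfl
          exact ((hbase _ v.2).2)
      | one => exact Commute.one_left _
      | mul y z _ _ hy hz => exact hy.mul_left hz
      | inv y _ hy => exact hy.inv_left
    exact Subtype.ext this.eq
  -- H is free: Nielsen–Schreier
  set e : ↥H ≃* FreeGroup (IsFreeGroup.Generators ↥H) := IsFreeGroup.toFreeGroup ↥H with he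
  haveI : Subsingleton (IsFreeGroup.Generators ↥H) := by
    by_contra hns
    rw [not_subsingleton_iff_nontrivial] at hns
    obtain ⟨s, t, hst⟩ := exists_pair_ne (IsFreeGroup.Generators ↥H)
    apply of_not_commute hst
    have hc := hcomm (e.symm (FreeGroup.of s)) (e.symm (FreeGroup.of t))
    have := hc.map e.toMonoidHom
    simpa using this
  rcases isEmpty_or_nonempty (IsFreeGroup.Generators ↥H) with hemp | ⟨⟨u⟩⟩
  · exfalso
    apply ha
    have hsub : Subsingleton (FreeGroup (IsFreeGroup.Generators ↥H)) :=
      ⟨fun z w => by rw [freegroup_empty_eq_one z, freegroup_empty_eq_one w]⟩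
    have : (⟨a, haH⟩ : ↥H) = ⟨1, one_mem _⟩ := by
      apply e.injective
      exact hsub.elim _ _
    exact congrArg Subtype.val this
  · set w : ↥H := e.symm (FreeGroup.of u) with hw
    have hall : ∀ h : ↥H, h ∈ Subgroup.zpowers w := by
      intro h
      obtain ⟨k, hk⟩ := Subgroup.mem_zpowers_iff.mp (mem_zpowers_of_subsingleton u (e h))
      refine Subgroup.mem_zpowers_iff.mpr ⟨k, ?_⟩
      rw [hw, ← map_zpow, hk, MulEquiv.symm_apply_apply]
    refine ⟨(w : FreeGroup (Fin n)), ?_, ?_⟩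
    · obtain ⟨k, hk⟩ := Subgroup.mem_zpowers_iff.mp (hall ⟨x, hxH⟩)
      refine Subgroup.mem_zpowers_iff.mpr ⟨k, ?_⟩
      rw [← SubgroupClass.coe_zpow, hk]
    · obtain ⟨k, hk⟩ := Subgroup.mem_zpowers_iff.mp (hall ⟨a, haH⟩)
      refine Subgroup.mem_zpowers_iff.mpr ⟨k, ?_⟩
      rw [← SubgroupClass.coe_zpow, hk]

end Stmt6Aux

theorem stmt6 (n : ℕ) (p : ℕ) (hp : p.Prime)
    (a : FreeGroup (Fin n)) (A : Subgroup (FreeGroup (Fin n)))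
    (hA : A = Subgroup.zpowers a)
    (hmax : ∀ e : FreeGroup (Fin n), A ≤ Subgroup.zpowers e →
      Subgroup.zpowers e = A) :
    ∀ x : FreeGroup (Fin n), x ∉ A →
      ∃ (P : Type) (_ : Group P) (_ : Finite P), IsPGroup p P ∧
        ∃ φ : FreeGroup (Fin n) →* P, φ x ∉ A.map φ := by

  intro x hx
  by_cases ha1 : a = 1
  · exfalso
    have hbot : A = ⊥ := by rw [hA, ha1, Subgroup.zpowers_one_eq_bot]
    have h2 := hmax x (by rw [hbot]; exact bot_le)
    exact absurd (h2 ▸ Subgroup.mem_zpowers x) hx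
  by_cases hcom : Commute x a
  · exfalso
    obtain ⟨E, hxE, haE⟩ := Stmt6Aux.exists_common_zpowers hcom ha1
    have hle : A ≤ Subgroup.zpowers E := by rw [hA]; exact Subgroup.zpowers_le.mpr haE
    have h2 := hmax E hle
    exact absurd (h2 ▸ hxE) hx
  · have hgne : x * a * x⁻¹ * a⁻¹ ≠ 1 := by
      intro h
      apply hcom
      have h2 : x * a * x⁻¹ = a := mul_inv_eq_one.mp h
      have h3 : x * a = a * x := mul_inv_eq_iff_eq_mul.mp h2
      exact h3
    obtain ⟨P, hG, hF, hpg, φ, hφ⟩ := Stmt6Aux.resid p hp n (x * a * x⁻¹ * a⁻¹) hgne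
    refine ⟨P, hG, hF, hpg, φ, ?_⟩
    intro hmem
    obtain ⟨y, hy, hyx⟩ := Subgroup.mem_map.mp hmem
    rw [hA] at hy
    obtain ⟨k, hk⟩ := Subgroup.mem_zpowers_iff.mp hy
    apply hφ
    have h1 : φ x = (φ a)^k := by rw [← hyx, ← hk, map_zpow]
    simp only [_root_.map_mul, map_inv, h1]
    group
end

section
/- Let p be a prime and R = (ℤ/pℤ)[t]/(1−t^p). Let M̂ and N̂ be free R-modules with bases (âᵢ)ᵢ and (b̂ⱼ)ⱼ, and let M and N be free (ℤ/pℤ)-modules with bases (aᵢ)ᵢ and (bⱼ)ⱼ of the same respective index sets. Let φ_M : M̂ → M and φ_N : N̂ → N be the (ℤ/pℤ)-linear maps determined by âᵢ ↦ aᵢ, b̂ⱼ ↦ bⱼ and t ↦ 1 (i.e., the maps induced by the augmentation t ↦ 1 on coefficients). Suppose f : M → N is (ℤ/pℤ)-linear, f̂ : M̂ → N̂ is R-linear, and φ_N ∘ f̂ = f ∘ φ_M. If f is injective, then f̂ is injective. -/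
/-- The ring `(ℤ/pℤ)[t]/(1 - t^p)`. -/
abbrev AugRing (p : ℕ) : Type :=
  Polynomial (ZMod p) ⧸ Ideal.span {(1 : Polynomial (ZMod p)) - Polynomial.X ^ p}

/-- Coordinates of a semilinear map sending basis to basis. -/
lemma coord_phi {R S : Type*} [CommRing R] [CommRing S] {ε : R →+* S}
    {Mh M : Type*} [AddCommGroup Mh] [Module R Mh] [AddCommGroup M] [Module S M]
    {ι : Type*} (bMh : Module.Basis ι R Mh) (bM : Module.Basis ι S M)
    (φ : Mh →ₛₗ[ε] M) (hφ : ∀ i, φ (bMh i) = bM i) (x : Mh) (i : ι) :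
    bM.repr (φ x) i = ε (bMh.repr x i) := by
  classical
  suffices h : ∀ l : ι →₀ R, bM.repr (φ (bMh.repr.symm l)) = l.mapRange ε ε.map_zero by
    have := h (bMh.repr x)
    simp only [LinearEquiv.symm_apply_apply] at this
    rw [this, Finsupp.mapRange_apply]
  intro l
  induction l using Finsupp.induction_linear with
  | zero => simp
  | add a b ha hb =>
    rw [map_add, map_add, map_add, Finsupp.mapRange_add ε.map_add, ha, hb]
  | single a r =>
    have : bMh.repr.symm (Finsupp.single a r) = r • bMh a := by
      rw [Module.Basis.repr_symm_apply, Finsupp.linearCombination_single]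
    rw [this, LinearMap.map_smulₛₗ, hφ, map_smul, Module.Basis.repr_self,
      Finsupp.mapRange_single, Finsupp.smul_single, smul_eq_mul, mul_one]

theorem stmt12 (p : ℕ) (hp : p.Prime)
    {ι κ : Type} {Mh Nh M N : Type}
    [AddCommGroup Mh] [Module (AugRing p) Mh]
    [AddCommGroup Nh] [Module (AugRing p) Nh]
    [AddCommGroup M] [Module (ZMod p) M]
    [AddCommGroup N] [Module (ZMod p) N]
    (bMh : Module.Basis ι (AugRing p) Mh) (bNh : Module.Basis κ (AugRing p) Nh)
    (bM : Module.Basis ι (ZMod p) M) (bN : Module.Basis κ (ZMod p) N)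
    (ε : AugRing p →+* ZMod p)
    (hε : ε (Ideal.Quotient.mk _ Polynomial.X) = 1)
    (φM : Mh →ₛₗ[ε] M) (φN : Nh →ₛₗ[ε] N)
    (hφM : ∀ i : ι, φM (bMh i) = bM i) (hφN : ∀ j : κ, φN (bNh j) = bN j)
    (f : M →ₗ[ZMod p] N) (fh : Mh →ₗ[AugRing p] Nh)
    (hcomm : ∀ x : Mh, φN (fh x) = f (φM x))
    (hf : Function.Injective f) :
    Function.Injective fh := by
  classical
  haveI := Fact.mk hp
  set I : Ideal (Polynomial (ZMod p)) :=
    Ideal.span {(1 : Polynomial (ZMod p)) - Polynomial.X ^ p} with hI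
  let mk : Polynomial (ZMod p) →+* AugRing p := Ideal.Quotient.mk I
  set u : AugRing p := mk (1 - Polynomial.X) with hu
  -- ε is evaluation at 1
  have hεq : ∀ q : Polynomial (ZMod p), ε (mk q) = q.eval 1 := by
    have : ε.comp mk = Polynomial.evalRingHom (1 : ZMod p) := by
      apply Polynomial.ringHom_ext
      · intro a
        have := RingHom.ext_zmod ((ε.comp mk).comp Polynomial.C)
          ((Polynomial.evalRingHom (1 : ZMod p)).comp Polynomial.C)
        exact RingHom.congr_fun this a
      · simpa using hε
    intro q
    exact RingHom.congr_fun this q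
  -- (1-X)^p = 1 - X^p
  have hpowp : ((1 : Polynomial (ZMod p)) - Polynomial.X) ^ p
      = 1 - Polynomial.X ^ p := by
    rw [sub_pow_char]; simp
  have hup : u ^ p = 0 := by
    rw [hu, ← map_pow, hpowp, Ideal.Quotient.eq_zero_iff_mem]
    exact Ideal.mem_span_singleton_self _
  -- divisibility by u for augmentation-zero elements
  have hdvd : ∀ c : AugRing p, ε c = 0 → ∃ d, c = u * d := by
    intro c hc
    obtain ⟨q, rfl⟩ := Ideal.Quotient.mk_surjective (I := I) c
    have hq : q.eval 1 = 0 := by rw [← hεq]; exact hc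
    have : (Polynomial.X - Polynomial.C (1 : ZMod p)) ∣ q :=
      Polynomial.dvd_iff_isRoot.2 hq
    obtain ⟨r, hr⟩ := this
    refine ⟨-mk r, ?_⟩
    have : (q : Polynomial (ZMod p)) = (1 - Polynomial.X) * (-r) := by
      rw [hr]; ring_nf; simp [mul_comm]
    calc mk q = mk ((1 - Polynomial.X) * (-r)) := by rw [← this]
    _ = u * (-mk r) := by rw [map_mul, map_neg]
  -- u^k * c ≠ 0 when k < p and ε c ≠ 0
  have hne : ∀ k : ℕ, k < p → ∀ c : AugRing p, ε c ≠ 0 → u ^ k * c ≠ 0 := by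
    intro k hk c hc h0
    obtain ⟨q, rfl⟩ := Ideal.Quotient.mk_surjective (I := I) c
    have hq : q.eval 1 ≠ 0 := by rw [← hεq]; exact hc
    have hmem : ((1 : Polynomial (ZMod p)) - Polynomial.X) ^ k * q ∈ I := by
      rw [← Ideal.Quotient.eq_zero_iff_mem]
      have : (Ideal.Quotient.mk I) (((1 : Polynomial (ZMod p)) - Polynomial.X) ^ k * q)
          = u ^ k * mk q := by rw [map_mul, map_pow]
      rw [this]; exact h0
    rw [hI, Ideal.mem_span_singleton, ← hpowp] at hmem
    obtain ⟨r, hr⟩ := hmem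
    have hXne : ((1 : Polynomial (ZMod p)) - Polynomial.X) ^ k ≠ 0 := by
      apply pow_ne_zero
      intro h
      have := congrArg (Polynomial.eval 0) h
      simp at this
    have hcancel : q = ((1 : Polynomial (ZMod p)) - Polynomial.X) ^ (p - k) * r := by
      have : ((1 : Polynomial (ZMod p)) - Polynomial.X) ^ k * q
          = ((1 : Polynomial (ZMod p)) - Polynomial.X) ^ k
            * (((1 : Polynomial (ZMod p)) - Polynomial.X) ^ (p - k) * r) := by
        rw [hr, ← mul_assoc, ← pow_add]
        congr 2
        omega
      exact mul_left_cancel₀ hXne this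
    apply hq
    have : q.eval 1 = (((1:Polynomial (ZMod p)) - Polynomial.X) ^ (p-k) * r).eval 1 := by
      rw [hcancel]
    rw [this, Polynomial.eval_mul, Polynomial.eval_pow]
    have : ((1:Polynomial (ZMod p)) - Polynomial.X).eval 1 = 0 := by simp
    rw [this, zero_pow (by omega), zero_mul]
  -- coordinate lemmas
  have hM : ∀ (x : Mh) (i : ι), bM.repr (φM x) i = ε (bMh.repr x i) :=
    coord_phi bMh bM φM hφM
  have hN : ∀ (x : Nh) (j : κ), bN.repr (φN x) j = ε (bNh.repr x j) :=
    coord_phi bNh bN φN hφN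
  -- main argument
  rw [injective_iff_map_eq_zero]
  intro α hα
  by_contra hα0
  set P : ℕ → Prop := fun k => ∃ β, α = u ^ k • β with hP
  have hP0 : P 0 := ⟨α, by simp⟩
  set k : ℕ := Nat.findGreatest P p with hk
  have hPk : P k := Nat.findGreatest_spec (Nat.zero_le p) hP0
  obtain ⟨β, hβ⟩ := hPk
  have hkp : k < p := by
    rcases lt_or_eq_of_le (Nat.findGreatest_le (P := P) p) with h | h
    · exact h
    · exfalso
      apply hα0
      have hkeq : k = p := hk.trans h
      rw [hβ, hkeq, hup]; exact zero_smul (AugRing p) β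
  have hmax : ¬ P (k + 1) :=
    Nat.findGreatest_is_greatest (Nat.lt_succ_self k) (by omega)
  -- φM β ≠ 0, via a nonzero augmented coordinate
  have hφβ : ∃ i, ε (bMh.repr β i) ≠ 0 := by
    by_contra h
    push_neg at h
    apply hmax
    set dvf : AugRing p → AugRing p := fun x =>
      if x = 0 then 0 else if h : ∃ y, x = u * y then h.choose else 0 with hdvf
    have hdvf0 : dvf 0 = 0 := by simp [hdvf]
    have hud : ∀ i, u * dvf (bMh.repr β i) = bMh.repr β i := by
      intro i
      by_cases h0 : bMh.repr β i = 0
      · simp [hdvf, h0]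
      · have hex : ∃ y, bMh.repr β i = u * y := hdvd _ (h i)
        simp only [hdvf, h0, if_false, dif_pos hex]
        exact (hex.choose_spec).symm
    refine ⟨bMh.repr.symm ((bMh.repr β).mapRange dvf hdvf0), ?_⟩
    have hβγ : β = u • bMh.repr.symm ((bMh.repr β).mapRange dvf hdvf0) := by
      apply bMh.repr.injective
      rw [map_smul, LinearEquiv.apply_symm_apply]
      ext i
      rw [Finsupp.smul_apply, Finsupp.mapRange_apply, smul_eq_mul, hud]
    conv_lhs => rw [hβ, hβγ]
    rw [← mul_smul, ← pow_succ]
  obtain ⟨i0, hi0⟩ := hφβ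
  have hφMβ : φM β ≠ 0 := by
    intro h
    apply hi0
    rw [← hM β i0, h, map_zero, Finsupp.coe_zero, Pi.zero_apply]
  have hfφ : φN (fh β) ≠ 0 := by
    rw [hcomm]
    intro h
    apply hφMβ
    apply hf
    rw [h, map_zero]
  have hj : ∃ j, ε (bNh.repr (fh β) j) ≠ 0 := by
    by_contra h
    push_neg at h
    apply hfφ
    have : bN.repr (φN (fh β)) = 0 := by
      ext j; rw [hN, h, Finsupp.coe_zero, Pi.zero_apply]
    exact bN.repr.map_eq_zero_iff.mp this
  obtain ⟨j, hjne⟩ := hj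
  have hzero : u ^ k * bNh.repr (fh β) j = 0 := by
    have h1 : fh α = u ^ k • fh β := by rw [hβ, map_smul]
    have h2 : bNh.repr (fh α) j = u ^ k * bNh.repr (fh β) j := by
      rw [h1, map_smul, Finsupp.smul_apply, smul_eq_mul]
    rw [← h2, hα, map_zero, Finsupp.coe_zero, Pi.zero_apply]
  exact hne k hkp _ hjne hzero
end
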